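/- Let q be a prime power and n a positive integer with gcd(n,q)=1. Let ω ∈ F_q* be an element of multiplicative order r, let m be the smallest positive integer such that nr divides q^m − 1, let δ ∈ F_{q^m}* be an element of order nr with δ^n = ω, and set ξ = δ^r. Let C = ⟨g(x)⟩ ⊆ F_q[x]/(x^n − ω) be an ω-constacyclic code of length n. Let l be an integer with gcd(l,n)=1, let d be an integer with 1 ≤ d ≤ n−1, and let b be an arbitrary integer. If every element of {δ·ξ^{l·i} : b ≤ i ≤ b+d−1} is a root of g(x), then the minimum Hamming distance of C is at least d+1. -/

import Mathlib

open Polynomial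

/-- The pair-distance between two vectors indexed by `ZMod n`,
with indices taken modulo `n`. -/
def pairDist {n : ℕ} [NeZero n] {α : Type*} [DecidableEq α] (u v : ZMod n → α) : ℕ :=
  (Finset.univ.filter fun i : ZMod n => (u i, u (i + 1)) ≠ (v i, v (i + 1))).card

/-- A finite subset of `ZMod n` consisting of (at least one) cyclically consecutive elements. -/
def IsArc {n : ℕ} (T : Finset (ZMod n)) : Prop :=
  ∃ (a : ZMod n) (k : ℕ), 0 < k ∧ T = (Finset.range k).image fun j : ℕ => a + (j : ZMod n)

/-- `L(S)`: the minimal number of parts in a partition of `S` into nonempty sets of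
cyclically consecutive elements of `ZMod n`. -/
noncomputable def cycL {n : ℕ} (S : Finset (ZMod n)) : ℕ :=
  sInf {m | ∃ P : Finset (Finset (ZMod n)), P.card = m ∧ (∀ T ∈ P, IsArc T) ∧
    (↑P : Set (Finset (ZMod n))).PairwiseDisjoint id ∧ P.sup id = S}

/-- The polynomial `∑ i, c i * x^i` associated to a vector `c` of length `n`. -/
noncomputable def polyOf {n : ℕ} [NeZero n] {F : Type*} [Semiring F] (c : ZMod n → F) :
    Polynomial F :=
  ∑ i : ZMod n, Polynomial.C (c i) * Polynomial.X ^ i.val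

/-- `d` is the minimum pair-distance of the code `Code`. -/
def IsMinPairDist {n : ℕ} [NeZero n] {α : Type*} [DecidableEq α]
    (Code : Set (ZMod n → α)) (d : ℕ) : Prop :=
  (∀ u ∈ Code, ∀ v ∈ Code, u ≠ v → d ≤ pairDist u v) ∧
    ∃ u ∈ Code, ∃ v ∈ Code, u ≠ v ∧ pairDist u v = d

/-- The coefficient `a₀(i) = ∑_{j=0}^{⌊(i−2)/2⌋} C(i−2−j, j) b^{i−2−2j} c^{j+1}`. -/
noncomputable def aCoeff0 {F : Type*} [Field F] (b c : F) (i : ℕ) : F :=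
  ∑ j ∈ Finset.range ((i - 2) / 2 + 1),
    ((i - 2 - j).choose j : F) * b ^ (i - 2 - 2 * j) * c ^ (j + 1)

/-- The coefficient `a₁(i) = ∑_{j=0}^{⌊(i−1)/2⌋} C(i−1−j, j) b^{i−1−2j} c^{j}`. -/
noncomputable def aCoeff1 {F : Type*} [Field F] (b c : F) (i : ℕ) : F :=
  ∑ j ∈ Finset.range ((i - 1) / 2 + 1),
    ((i - 1 - j).choose j : F) * b ^ (i - 1 - 2 * j) * c ^ j

/-- BCH-type bound for constacyclic codes.
If every element of `{δ·ξ^{l·i} : b ≤ i ≤ b+d−1}` is a root of the generator polynomial `g`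
of the `ω`-constacyclic code `C = ⟨g⟩ ⊆ F_q[x]/(x^n − ω)`, then the minimum Hamming
distance of `C` is at least `d + 1`. -/
theorem stmt0 {F E : Type*} [Field F] [Fintype F] [DecidableEq F]
    [Field E] [Fintype E] [Algebra F E]
    {q n r m : ℕ} [NeZero n] (hq : Fintype.card F = q)
    (hcop : Nat.gcd n q = 1)
    {ω : F} (hω0 : ω ≠ 0) (hr : orderOf ω = r)
    (hm : 0 < m ∧ n * r ∣ q ^ m - 1 ∧ ∀ m' : ℕ, 0 < m' → n * r ∣ q ^ m' - 1 → m ≤ m')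
    (hE : Fintype.card E = q ^ m)
    {δ : E} (hδ : orderOf δ = n * r) (hδn : δ ^ n = algebraMap F E ω)
    {ξ : E} (hξ : ξ = δ ^ r)
    {g : Polynomial F} (hmonic : g.Monic) (hgdvd : g ∣ X ^ n - C ω)
    {l : ℤ} (hl : Int.gcd l n = 1) {d : ℕ} (hd1 : 1 ≤ d) (hdn : d ≤ n - 1)
    (b : ℤ)
    (hroots : ∀ i : ℤ, b ≤ i → i ≤ b + d - 1 → Polynomial.aeval (δ * ξ ^ (l * i)) g = 0)
    (c : ZMod n → F) (hc : c ≠ 0) (hcC : g ∣ polyOf c) :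
    d + 1 ≤ hammingNorm c := by
  classical
  by_contra hcon
  push_neg at hcon
  set S : Finset (ZMod n) := Finset.univ.filter (fun k => c k ≠ 0) with hS
  have hScard : S.card ≤ d := by
    have : hammingNorm c ≤ d := Nat.lt_succ_iff.mp hcon
    simpa [hammingNorm, hS] using this
  -- nonzeroness facts
  have hδ0 : δ ≠ 0 := by
    intro h
    apply hω0
    apply (algebraMap F E).injective
    rw [← hδn, h, map_zero, zero_pow (NeZero.ne n)]
  have hξ0 : ξ ≠ 0 := hξ ▸ pow_ne_zero _ hδ0
  set δu : Eˣ := Units.mk0 δ hδ0 with hδu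
  set ξu : Eˣ := Units.mk0 ξ hξ0 with hξu
  have hδuord : orderOf δu = n * r := by
    rw [← orderOf_units]; simpa [hδu] using hδ
  have hr0 : 0 < r := by
    have : 0 < orderOf δu := orderOf_pos δu
    rw [hδuord] at this
    exact Nat.pos_of_mul_pos_left (by rwa [Nat.mul_comm] at this)
  have hξuδu : ξu = δu ^ r := by
    ext; simp [hξu, hδu, hξ]
  have hξuord : orderOf ξu = n := by
    rw [hξuδu, orderOf_pow, hδuord, Nat.gcd_eq_right (dvd_mul_left r n),
      Nat.mul_div_cancel _ hr0]
  -- coprimality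
  have hcopl : IsCoprime (n : ℤ) l := (Int.isCoprime_iff_gcd_eq_one.mpr hl).symm
  -- injectivity of k ↦ ξ ^ (l * k.val)
  have hxinj : ∀ k k' : ZMod n, ξ ^ (l * (k.val : ℤ)) = ξ ^ (l * (k'.val : ℤ)) → k = k' := by
    intro k k' h
    have hu : ξu ^ (l * (k.val : ℤ)) = ξu ^ (l * (k'.val : ℤ)) := by
      ext
      simpa [Units.val_zpow_eq_zpow_val, hξu] using h
    have h1 : ξu ^ (l * (k.val : ℤ) - l * (k'.val : ℤ)) = 1 := by
      rw [zpow_sub, hu, mul_inv_cancel]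
    have h2 : (n : ℤ) ∣ l * ((k.val : ℤ) - (k'.val : ℤ)) := by
      have := orderOf_dvd_iff_zpow_eq_one.mpr h1
      rw [hξuord] at this
      convert this using 1
      ring
    have h3 : (n : ℤ) ∣ ((k.val : ℤ) - (k'.val : ℤ)) := hcopl.dvd_of_dvd_mul_left h2
    have h4 : (((k.val : ℤ) - (k'.val : ℤ) : ℤ) : ZMod n) = 0 :=
      (ZMod.intCast_zmod_eq_zero_iff_dvd _ _).mpr h3
    push_cast at h4
    rw [sub_eq_zero] at h4
    simpa [ZMod.natCast_val, ZMod.cast_id] using h4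
  -- the coefficient vector
  set a : ZMod n → E := fun k =>
    algebraMap F E (c k) * δ ^ k.val * ξ ^ (l * b * (k.val : ℤ)) with ha
  have haS : ∀ k : ZMod n, k ∉ S → a k = 0 := by
    intro k hk
    have : c k = 0 := by
      by_contra h
      exact hk (by simp [hS, h])
    simp [ha, this]
  -- key evaluation identity for each j < S.card
  have hkey : ∀ j : Fin S.card,
      ∑ t : Fin S.card, a (S.equivFin.symm t) *
        (ξ ^ (l * ((S.equivFin.symm t : ZMod n).val : ℤ))) ^ (j : ℕ) = 0 := by
    intro j
    have hjd : (j : ℕ) < d := lt_of_lt_of_le j.isLt hScard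
    set i : ℤ := b + (j : ℕ) with hi
    have hib : b ≤ i := by simp [hi]
    have hid : i ≤ b + d - 1 := by
      have : ((j : ℕ) : ℤ) < (d : ℤ) := by exact_mod_cast hjd
      omega
    -- polyOf c vanishes at δ * ξ ^ (l * i)
    obtain ⟨h, hh⟩ := hcC
    have hzero : Polynomial.aeval (δ * ξ ^ (l * i)) (polyOf c) = 0 := by
      rw [hh, map_mul, hroots i hib hid, zero_mul]
    have hexp : ∀ k : ZMod n,
        algebraMap F E (c k) * (δ * ξ ^ (l * i)) ^ k.val
          = a k * (ξ ^ (l * (k.val : ℤ))) ^ (j : ℕ) := by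
      intro k
      rw [ha]
      simp only []
      rw [mul_pow, ← zpow_natCast (ξ ^ (l * i)) k.val, ← zpow_mul,
        ← zpow_natCast (ξ ^ (l * (k.val : ℤ))) (j : ℕ), ← zpow_mul]
      rw [mul_assoc, mul_assoc, mul_assoc]
      congr 2
      rw [← zpow_add₀ hξ0]
      congr 1
      rw [hi]
      ring
    have hsum : ∑ k : ZMod n, a k * (ξ ^ (l * (k.val : ℤ))) ^ (j : ℕ) = 0 := by
      rw [← hzero]
      simp only [polyOf, map_sum, map_mul, map_pow, aeval_C, aeval_X]
      exact Finset.sum_congr rfl fun k _ => (hexp k).symm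
    have hsub : ∑ k ∈ S, a k * (ξ ^ (l * (k.val : ℤ))) ^ (j : ℕ) = 0 := by
      rw [← hsum]
      exact Finset.sum_subset (Finset.subset_univ S)
        (fun k _ hk => by rw [haS k hk, zero_mul])
    calc ∑ t : Fin S.card, a (S.equivFin.symm t) *
          (ξ ^ (l * ((S.equivFin.symm t : ZMod n).val : ℤ))) ^ (j : ℕ)
        = ∑ k : S, a k * (ξ ^ (l * ((k : ZMod n).val : ℤ))) ^ (j : ℕ) :=
          Equiv.sum_comp S.equivFin.symm
            (fun k : S => a (k : ZMod n) * (ξ ^ (l * (((k : ZMod n)).val : ℤ))) ^ (j : ℕ))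
      _ = ∑ k ∈ S, a k * (ξ ^ (l * (k.val : ℤ))) ^ (j : ℕ) :=
          Finset.sum_coe_sort S (fun k => a k * (ξ ^ (l * (k.val : ℤ))) ^ (j : ℕ))
      _ = 0 := hsub
  -- Vandermonde
  have hvinj : Function.Injective
      (fun t : Fin S.card => ξ ^ (l * ((S.equivFin.symm t : ZMod n).val : ℤ))) := by
    intro t t' h
    have := hxinj _ _ h
    have := Subtype.ext this
    exact S.equivFin.symm.injective this
  have hzero := Matrix.eq_zero_of_forall_pow_sum_mul_pow_eq_zero hvinj hkey
  -- derive contradiction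
  obtain ⟨k, hck⟩ := Function.ne_iff.mp hc
  have hck : c k ≠ 0 := hck
  have hkS : k ∈ S := by simp [hS, hck]
  have : a k = 0 := by
    have := congrFun hzero (S.equivFin ⟨k, hkS⟩)
    simpa using this
  rw [ha] at this
  simp only [mul_eq_zero] at this
  rcases this with (h1 | h2)
  · rcases h1 with (h1 | h1)
    · exact hck ((map_eq_zero_iff _ (algebraMap F E).injective).mp h1)
    · exact pow_ne_zero _ hδ0 h1
  · exact zpow_ne_zero _ hξ0 h2
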